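/- Let p be prime, n ≥ 1, and for i ≥ 0 set w_n(i) := p^{−i^{2^{n−1}}} ∈ ℝ (the valuation of a_{n,i} = ϖ^{1/p^{i^{2^{n−1}}}}). Let N_n : ℤ_{≥0} → ℝ be the function N_n(ℓ) = w_n(ℓ). For any m ≥ 1 and any integer ℓ = km + r with k > 2m and 0 ≤ r < m, one has m · w_n(k²) < w_n(ℓ), i.e., m·p^{−k^{2^n}} < p^{−(km+r)^{2^{n−1}}}. -/

import Mathlib

lemma stmt11_aux1 (y c M : ℕ) (hy : 1 ≤ y) : y ^ (M + 1) + c ≤ (y + c) ^ (M + 1) := by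
  have h1 : y ^ M ≤ (y + c) ^ M := Nat.pow_le_pow_left (Nat.le_add_right y c) M
  have h2 : 1 ≤ y ^ M := Nat.one_le_pow M y hy
  calc y ^ (M + 1) + c = y * y ^ M + c := by ring
    _ ≤ y * y ^ M + c * y ^ M := by nlinarith
    _ = (y + c) * y ^ M := by ring
    _ ≤ (y + c) * (y + c) ^ M := by gcongr
    _ = (y + c) ^ (M + 1) := by ring

/-- Numerical core of the comparison of Newton polygons: for `p` prime, `n ≥ 1`,
`m ≥ 1`, `k > 2m`, `0 ≤ r < m`, one has `m · p^{−k^{2^n}} < p^{−(km+r)^{2^{n−1}}}`. -/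
theorem stmt11 (p : ℕ) (hp : p.Prime) (n : ℕ) (hn : 1 ≤ n) (m k r : ℕ)
    (hm : 1 ≤ m) (hk : 2 * m < k) (hr : r < m) :
    (m : ℝ) * (p : ℝ) ^ (-((k : ℤ) ^ (2 ^ n))) <
      (p : ℝ) ^ (-(((k * m + r : ℕ) : ℤ) ^ (2 ^ (n - 1)))) := by
  have hp2 : 2 ≤ p := hp.two_le
  set N := 2 ^ (n - 1) with hN
  have hNpos : 1 ≤ N := Nat.one_le_two_pow
  have h2n : 2 ^ n = N * 2 := by rw [hN, ← pow_succ, Nat.sub_add_cancel hn]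
  set y := k * m + r with hy
  set x := k ^ 2 with hx
  have hyx : y + m < x := by simp only [hy, hx]; nlinarith
  have hy1 : 1 ≤ y := by
    have : 1 * 1 ≤ k * m := Nat.mul_le_mul (by omega) hm
    omega
  set c := x - y with hc
  have hcm : m < c := by omega
  have hxyc : x = y + c := by omega
  have hkey : y ^ N + m < x ^ N := by
    obtain ⟨M, hM⟩ : ∃ M, N = M + 1 := ⟨N - 1, by omega⟩
    calc y ^ N + m < y ^ N + c := by omega
      _ = y ^ (M + 1) + c := by rw [hM]
      _ ≤ (y + c) ^ (M + 1) := stmt11_aux1 y c M hy1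
      _ = x ^ N := by rw [← hxyc, hM]
  have hd : m < p ^ (x ^ N - y ^ N) := by
    have h1 : x ^ N - y ^ N < 2 ^ (x ^ N - y ^ N) := Nat.lt_two_pow_self (n := _)
    have h2 : 2 ^ (x ^ N - y ^ N) ≤ p ^ (x ^ N - y ^ N) := Nat.pow_le_pow_left hp2 _
    omega
  have hp0 : (0:ℝ) < p := by positivity
  have hA : (k : ℤ) ^ (2 ^ n) = ((x ^ N : ℕ) : ℤ) := by
    rw [h2n, hx]; push_cast; ring
  have hB : ((k * m + r : ℕ) : ℤ) ^ N = ((y ^ N : ℕ) : ℤ) := by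
    rw [hy]; push_cast; ring
  rw [hA, hB]
  have hle : y ^ N ≤ x ^ N := by omega
  have hdiff : ((x ^ N - y ^ N : ℕ) : ℤ) = ((x ^ N : ℕ) : ℤ) - ((y ^ N : ℕ) : ℤ) := by
    push_cast [hle]; ring
  have hrw : -(((y ^ N : ℕ)) : ℤ) = ((x ^ N - y ^ N : ℕ) : ℤ) + (-((x ^ N : ℕ) : ℤ)) := by
    omega
  rw [hrw, zpow_add₀ (ne_of_gt hp0), zpow_natCast]
  have hmlt : (m : ℝ) < (p : ℝ) ^ (x ^ N - y ^ N) := by exact_mod_cast hd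
  have hpos : (0:ℝ) < (p : ℝ) ^ (-((x ^ N : ℕ) : ℤ)) := by positivity
  exact mul_lt_mul_of_pos_right hmlt hpos
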